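/- The number of isomorphism classes (fixing X pointwise) of rooted forests F of height at most t in which every leaf lies in X, together with a strictly ancestor-increasing labeling h : V(F) → {1,…,t}, is at most 2^{|X|·t + |X|·log t + |X|·log |X|}. -/

import Mathlib

/-- A rooted forest on vertex type `V`, given by a parent function together with
a depth function certifying acyclicity (roots have depth 1). -/
structure RootedForest (V : Type) where
  parent : V → Option V
  depth : V → ℕ
  depth_root : ∀ v, parent v = none → depth v = 1
  depth_child : ∀ v u, parent v = some u → depth v = depth u + 1

namespace RootedForest

variable {V : Type}

/-- `F.Ancestor u v` : `u` is a strict ancestor of `v` in the forest `F`. -/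
def Ancestor (F : RootedForest V) (u v : V) : Prop :=
  Relation.TransGen (fun a b : V => F.parent a = some b) v u

/-- Height of the forest: the maximum number of nodes on a root-to-leaf path,
equivalently the maximum depth of a node. -/
noncomputable def height (F : RootedForest V) : ℕ :=
  sSup (Set.range F.depth)

/-- The node set of the subtree of `F` rooted at `x` (including `x` itself). -/
def subtreeSet (F : RootedForest V) (x : V) : Set V :=
  {v | v = x ∨ F.Ancestor x v}

/-- `F` is a treedepth decomposition of `G`: every edge of `G` joins an
ancestor-descendant pair of `F`. -/
def IsTreedepthDecomp (F : RootedForest V) (G : SimpleGraph V) : Prop :=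
  ∀ ⦃u v⦄, G.Adj u v → F.Ancestor u v ∨ F.Ancestor v u

end RootedForest

/-- The treedepth of `G`: the minimum height of a treedepth decomposition of `G`. -/
noncomputable def SimpleGraph.treedepth {V : Type} (G : SimpleGraph V) : ℕ :=
  sInf {h | ∃ F : RootedForest V, F.IsTreedepthDecomp G ∧ F.height = h}

/-- A partial decomposition on the finite set `X` with height bound `t`: a rooted forest
on a node set `X ⊕ Fin m` (so `X ⊆ V(F)`), all of whose leaves lie in `X`, of height at
most `t`, together with a strictly ancestor-increasing labeling `h : V(F) → {1,…,t}`. -/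
structure PartialDecomp (X : Type) (t : ℕ) where
  m : ℕ
  F : RootedForest (X ⊕ Fin m)
  leaves_mem : ∀ v, (∀ u, F.parent u ≠ some v) → ∃ x : X, v = Sum.inl x
  height_le : F.height ≤ t
  label : (X ⊕ Fin m) → ℕ
  label_pos : ∀ v, 1 ≤ label v
  label_le : ∀ v, label v ≤ t
  label_anc : ∀ u v, F.Ancestor u v → label v < label u

/-- Equivalence of partial decompositions: a forest isomorphism fixing `X` pointwise and
preserving the labeling. -/
def PDEquiv {X : Type} {t : ℕ} (P Q : PartialDecomp X t) : Prop :=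
  ∃ e : (X ⊕ Fin P.m) ≃ (X ⊕ Fin Q.m),
    (∀ x : X, e (Sum.inl x) = Sum.inl x) ∧
    (∀ v, Q.F.parent (e v) = (P.F.parent v).map e) ∧
    (∀ v, Q.label (e v) = P.label v)


set_option linter.unusedSectionVars false

namespace PD17

open Relation

variable {X : Type} [Fintype X] [LinearOrder X] {t : ℕ}

/-- step relation: `b` is the parent of `a`. -/
def stp (P : PartialDecomp X t) (a b : X ⊕ Fin P.m) : Prop := P.F.parent a = some b

/-- `v` lies on the path from `inl x` to its root. -/
def onP (P : PartialDecomp X t) (x : X) (v : X ⊕ Fin P.m) : Prop :=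
  ReflTransGen (stp P) (Sum.inl x) v

lemma onP_self (P : PartialDecomp X t) (x : X) : onP P x (Sum.inl x) := ReflTransGen.refl

lemma stp_rightUnique (P : PartialDecomp X t) : Relator.RightUnique (stp P) := by
  intro a b c hb hc
  have hb' : P.F.parent a = some b := hb
  have hc' : P.F.parent a = some c := hc
  rw [hb'] at hc'
  exact Option.some.inj hc'

lemma label_lt {P : PartialDecomp X t} {u v : X ⊕ Fin P.m} (h : TransGen (stp P) u v) :
    P.label u < P.label v := P.label_anc v u h

lemma label_le_of_rtg {P : PartialDecomp X t} {u v : X ⊕ Fin P.m}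
    (h : ReflTransGen (stp P) u v) : P.label u ≤ P.label v := by
  rcases (Relation.reflTransGen_iff_eq_or_transGen).1 h with h | h
  · rw [h]
  · exact (label_lt h).le

lemma onP_total {P : PartialDecomp X t} {x : X} {u v : X ⊕ Fin P.m}
    (hu : onP P x u) (hv : onP P x v) :
    ReflTransGen (stp P) u v ∨ ReflTransGen (stp P) v u :=
  ReflTransGen.total_of_right_unique (stp_rightUnique P) hu hv

lemma onP_label_inj {P : PartialDecomp X t} {x : X} {u v : X ⊕ Fin P.m}
    (hu : onP P x u) (hv : onP P x v) (h : P.label u = P.label v) : u = v := by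
  rcases onP_total hu hv with hr | hr <;>
    rcases (Relation.reflTransGen_iff_eq_or_transGen).1 hr with he | ht'
  · exact he.symm
  · exact absurd h (by have := label_lt ht'; omega)
  · exact he
  · exact absurd h (by have := label_lt ht'; omega)

lemma rtg_of_le {P : PartialDecomp X t} {x : X} {u v : X ⊕ Fin P.m}
    (hu : onP P x u) (hv : onP P x v) (h : P.label u ≤ P.label v) :
    ReflTransGen (stp P) u v := by
  rcases onP_total hu hv with hr | hr
  · exact hr
  · rcases (Relation.reflTransGen_iff_eq_or_transGen).1 hr with he | ht'
    · exact he ▸ ReflTransGen.refl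
    · exact absurd h (by have := label_lt ht'; omega)

lemma depth_le (P : PartialDecomp X t) (v : X ⊕ Fin P.m) : P.F.depth v ≤ t := by
  refine le_trans ?_ P.height_le
  exact le_csSup ((Set.finite_range P.F.depth).bddAbove) ⟨v, rfl⟩

lemma exists_onP (P : PartialDecomp X t) (v : X ⊕ Fin P.m) : ∃ x, onP P x v := by
  suffices h : ∀ k (v : X ⊕ Fin P.m), t ≤ P.F.depth v + k → ∃ x, onP P x v by
    exact h t v (by omega)
  intro k
  induction k with
  | zero =>
    intro v hv
    have hleaf : ∀ u, P.F.parent u ≠ some v := by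
      intro u hu
      have h1 := P.F.depth_child u v hu
      have h2 := depth_le P u
      omega
    obtain ⟨x, rfl⟩ := P.leaves_mem v hleaf
    exact ⟨x, onP_self P x⟩
  | succ k ih =>
    intro v hv
    by_cases hleaf : ∀ u, P.F.parent u ≠ some v
    · obtain ⟨x, rfl⟩ := P.leaves_mem v hleaf
      exact ⟨x, onP_self P x⟩
    · push_neg at hleaf
      obtain ⟨u, hu⟩ := hleaf
      have h1 := P.F.depth_child u v hu
      obtain ⟨x, hx⟩ := ih u (by omega)
      exact ⟨x, hx.tail hu⟩

/-- The set of labels appearing on the path of `x`. -/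
noncomputable def labSet (P : PartialDecomp X t) (x : X) : Finset ℕ :=
  Set.Finite.toFinset (Set.Finite.image P.label (Set.toFinite {v | onP P x v}))

lemma mem_labSet {P : PartialDecomp X t} {x : X} {ℓ : ℕ} :
    ℓ ∈ labSet P x ↔ ∃ v, onP P x v ∧ P.label v = ℓ := by
  constructor
  · intro h
    obtain ⟨v, hv, he⟩ := (Set.Finite.mem_toFinset _).1 h
    exact ⟨v, hv, he⟩
  · intro ⟨v, hv, he⟩
    exact (Set.Finite.mem_toFinset _).2 ⟨v, hv, he⟩

lemma labSet_nonempty (P : PartialDecomp X t) (x : X) : (labSet P x).Nonempty :=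
  ⟨P.label (Sum.inl x), mem_labSet.2 ⟨_, onP_self P x, rfl⟩⟩

lemma labSet_bounds {P : PartialDecomp X t} {x : X} {ℓ : ℕ} (h : ℓ ∈ labSet P x) :
    1 ≤ ℓ ∧ ℓ ≤ t := by
  obtain ⟨v, _, rfl⟩ := mem_labSet.1 h
  exact ⟨P.label_pos v, P.label_le v⟩

open Classical in
/-- The vertex on the path of `x` having label `ℓ` (junk otherwise). -/
noncomputable def vAt (P : PartialDecomp X t) (x : X) (ℓ : ℕ) : X ⊕ Fin P.m :=
  if h : ∃ v, onP P x v ∧ P.label v = ℓ then h.choose else Sum.inl x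

lemma vAt_spec {P : PartialDecomp X t} {x : X} {ℓ : ℕ} (h : ℓ ∈ labSet P x) :
    onP P x (vAt P x ℓ) ∧ P.label (vAt P x ℓ) = ℓ := by
  rw [mem_labSet] at h
  rw [vAt, dif_pos h]
  exact h.choose_spec

lemma vAt_eq {P : PartialDecomp X t} {x : X} {v : X ⊕ Fin P.m} {ℓ : ℕ}
    (h1 : onP P x v) (h2 : P.label v = ℓ) : vAt P x ℓ = v := by
  have hm : ℓ ∈ labSet P x := mem_labSet.2 ⟨v, h1, h2⟩
  exact onP_label_inj (vAt_spec hm).1 h1 (by rw [(vAt_spec hm).2, h2])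

/-- The minimal `x` whose path contains `v`. -/
noncomputable def mo (P : PartialDecomp X t) (v : X ⊕ Fin P.m) : X :=
  (wellFounded_lt (α := X)).min {x | onP P x v} (exists_onP P v)

lemma mo_onP (P : PartialDecomp X t) (v : X ⊕ Fin P.m) : onP P (mo P v) v :=
  (wellFounded_lt (α := X)).min_mem {x | onP P x v} (exists_onP P v)

lemma mo_le {P : PartialDecomp X t} {x : X} {v : X ⊕ Fin P.m} (h : onP P x v) :
    mo P v ≤ x :=
  not_lt.1 ((wellFounded_lt (α := X)).not_lt_min {x | onP P x v} h)

/-- Labels on the path of `x` at which the vertex is shared with a smaller path. -/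
noncomputable def Dset (P : PartialDecomp X t) (x : X) : Finset ℕ :=
  (labSet P x).filter fun ℓ => mo P (vAt P x ℓ) < x

lemma mem_Dset {P : PartialDecomp X t} {x : X} {ℓ : ℕ} :
    ℓ ∈ Dset P x ↔ ℓ ∈ labSet P x ∧ mo P (vAt P x ℓ) < x := Finset.mem_filter

lemma Dset_up {P : PartialDecomp X t} {x : X} {ℓ ℓ' : ℕ}
    (h : ℓ ∈ Dset P x) (h' : ℓ' ∈ labSet P x) (hle : ℓ ≤ ℓ') : ℓ' ∈ Dset P x := by
  rw [mem_Dset] at h ⊢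
  obtain ⟨hm, hlt⟩ := h
  have hv := vAt_spec hm
  have hv' := vAt_spec h'
  have hr : ReflTransGen (stp P) (vAt P x ℓ) (vAt P x ℓ') :=
    rtg_of_le hv.1 hv'.1 (by rw [hv.2, hv'.2]; exact hle)
  have honp : onP P (mo P (vAt P x ℓ)) (vAt P x ℓ') := (mo_onP P _).trans hr
  exact ⟨h', lt_of_le_of_lt (mo_le honp) hlt⟩

lemma share_up {P : PartialDecomp X t} {x : X} {ℓ : ℕ} (hne : (Dset P x).Nonempty)
    (hℓ : ℓ ∈ labSet P x) (hge : (Dset P x).min' hne ≤ ℓ) :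
    ℓ ∈ labSet P (mo P (vAt P x ((Dset P x).min' hne))) ∧
      vAt P (mo P (vAt P x ((Dset P x).min' hne))) ℓ = vAt P x ℓ := by
  have hm0 : (Dset P x).min' hne ∈ labSet P x := (mem_Dset.1 (Finset.min'_mem _ hne)).1
  have hv0 := vAt_spec hm0
  have hv := vAt_spec hℓ
  have hr : ReflTransGen (stp P) (vAt P x ((Dset P x).min' hne)) (vAt P x ℓ) :=
    rtg_of_le hv0.1 hv.1 (by rw [hv0.2, hv.2]; exact hge)
  have honp : onP P (mo P (vAt P x ((Dset P x).min' hne))) (vAt P x ℓ) :=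
    (mo_onP P _).trans hr
  exact ⟨mem_labSet.2 ⟨_, honp, hv.2⟩, vAt_eq honp hv.2⟩

/-- The complete invariant. -/
noncomputable def data (P : PartialDecomp X t) (ht : 0 < t) :
    X → (Fin t → Bool) × Fin t × X := fun x =>
  (fun i => decide ((i : ℕ) + 1 ∈ labSet P x),
   ⟨(if h : (Dset P x).Nonempty then (Dset P x).min' h - 1 else 0) % t, Nat.mod_lt _ ht⟩,
   if h : (Dset P x).Nonempty then mo P (vAt P x ((Dset P x).min' h)) else x)

section DataEq

variable {P Q : PartialDecomp X t} {ht : 0 < t}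

lemma labSet_subset (hdata : data P ht = data Q ht) (x : X) :
    labSet P x ⊆ labSet Q x := by
  intro ℓ hℓ
  have hb := labSet_bounds hℓ
  have h := congrFun (congrArg Prod.fst (congrFun hdata x)) ⟨ℓ - 1, by omega⟩
  simp only [data] at h
  rw [decide_eq_decide] at h
  have he : ℓ - 1 + 1 = ℓ := by omega
  rw [he] at h
  exact h.1 hℓ

lemma labSet_eq (hdata : data P ht = data Q ht) (x : X) : labSet P x = labSet Q x :=
  Finset.Subset.antisymm (labSet_subset hdata x) (labSet_subset hdata.symm x)

lemma Dne_of (hdata : data P ht = data Q ht) {x : X} (hP : (Dset P x).Nonempty) :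
    (Dset Q x).Nonempty := by
  by_contra hQ
  have h := congrArg Prod.snd (congrArg Prod.snd (congrFun hdata x))
  simp only [data] at h
  rw [dif_pos hP, dif_neg hQ] at h
  have hlt : mo P (vAt P x ((Dset P x).min' hP)) < x :=
    (mem_Dset.1 (Finset.min'_mem _ hP)).2
  rw [h] at hlt
  exact lt_irrefl x hlt

lemma min'_eq (hdata : data P ht = data Q ht) {x : X} (hP : (Dset P x).Nonempty)
    (hQ : (Dset Q x).Nonempty) : (Dset P x).min' hP = (Dset Q x).min' hQ := by
  have h := congrArg Prod.fst (congrArg Prod.snd (congrFun hdata x))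
  simp only [data] at h
  have hbP := labSet_bounds (mem_Dset.1 (Finset.min'_mem _ hP)).1
  have hbQ := labSet_bounds (mem_Dset.1 (Finset.min'_mem _ hQ)).1
  have h' := congrArg Fin.val h
  simp only [dif_pos hP, dif_pos hQ] at h'
  rw [Nat.mod_eq_of_lt (by omega), Nat.mod_eq_of_lt (by omega)] at h'
  omega

lemma jeq (hdata : data P ht = data Q ht) {x : X} (hP : (Dset P x).Nonempty)
    (hQ : (Dset Q x).Nonempty) :
    mo P (vAt P x ((Dset P x).min' hP)) = mo Q (vAt Q x ((Dset Q x).min' hQ)) := by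
  have h := congrArg Prod.snd (congrArg Prod.snd (congrFun hdata x))
  simp only [data] at h
  rw [dif_pos hP, dif_pos hQ] at h
  exact h

lemma Dmem_of (hdata : data P ht = data Q ht) {x : X} {ℓ : ℕ} (h : ℓ ∈ Dset P x) :
    ℓ ∈ Dset Q x := by
  have hP : (Dset P x).Nonempty := ⟨ℓ, h⟩
  have hQ : (Dset Q x).Nonempty := Dne_of hdata hP
  have hmin : (Dset Q x).min' hQ ≤ ℓ := by
    rw [← min'_eq hdata hP hQ]
    exact Finset.min'_le _ _ h
  have hℓQ : ℓ ∈ labSet Q x := by rw [← labSet_eq hdata x]; exact (mem_Dset.1 h).1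
  exact Dset_up (Finset.min'_mem _ hQ) hℓQ hmin

lemma mo_transfer (hdata : data P ht = data Q ht) :
    ∀ x : X, ∀ ℓ ∈ labSet P x, mo P (vAt P x ℓ) = mo Q (vAt Q x ℓ) := by
  intro x
  induction x using WellFoundedLT.induction with
  | ind x IH =>
  intro ℓ hℓ
  by_cases hsh : ℓ ∈ Dset P x
  · have hP : (Dset P x).Nonempty := ⟨ℓ, hsh⟩
    have hQ : (Dset Q x).Nonempty := Dne_of hdata hP
    have hminQ : (Dset Q x).min' hQ = (Dset P x).min' hP := (min'_eq hdata hP hQ).symm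
    have hle : (Dset P x).min' hP ≤ ℓ := Finset.min'_le _ _ hsh
    obtain ⟨hmemj, heqP⟩ := share_up hP hℓ hle
    have hℓQ : ℓ ∈ labSet Q x := by rw [← labSet_eq hdata x]; exact hℓ
    obtain ⟨hmemjQ, heqQ⟩ := share_up hQ hℓQ (by rw [hminQ]; exact hle)
    have hj : mo Q (vAt Q x ((Dset Q x).min' hQ)) = mo P (vAt P x ((Dset P x).min' hP)) :=
      (jeq hdata hP hQ).symm
    have hjlt : mo P (vAt P x ((Dset P x).min' hP)) < x :=
      (mem_Dset.1 (Finset.min'_mem _ hP)).2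
    rw [← heqP, ← heqQ, hj]
    exact IH _ hjlt ℓ hmemj
  · have h1 : ¬mo P (vAt P x ℓ) < x := fun hlt => hsh (mem_Dset.2 ⟨hℓ, hlt⟩)
    have h2 : mo P (vAt P x ℓ) ≤ x := mo_le (vAt_spec hℓ).1
    have hℓQ : ℓ ∈ labSet Q x := by rw [← labSet_eq hdata x]; exact hℓ
    have hshQ : ℓ ∉ Dset Q x := fun h => hsh (Dmem_of hdata.symm h)
    have h3 : ¬mo Q (vAt Q x ℓ) < x := fun hlt => hshQ (mem_Dset.2 ⟨hℓQ, hlt⟩)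
    have h4 : mo Q (vAt Q x ℓ) ≤ x := mo_le (vAt_spec hℓQ).1
    have hx1 : mo P (vAt P x ℓ) = x := le_antisymm h2 (not_lt.1 h1)
    have hx2 : mo Q (vAt Q x ℓ) = x := le_antisymm h4 (not_lt.1 h3)
    rw [hx1, hx2]

lemma vAt_transfer (hdata : data P ht = data Q ht) {x y : X} {ℓ : ℕ}
    (hx : ℓ ∈ labSet P x) (hy : ℓ ∈ labSet P y)
    (h : vAt P x ℓ = vAt P y ℓ) : vAt Q x ℓ = vAt Q y ℓ := by
  have h1 := mo_transfer hdata x ℓ hx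
  have h2 := mo_transfer hdata y ℓ hy
  rw [h] at h1
  have hmo : mo Q (vAt Q x ℓ) = mo Q (vAt Q y ℓ) := by rw [← h1, ← h2]
  have hxQ : ℓ ∈ labSet Q x := by rw [← labSet_eq hdata x]; exact hx
  have hyQ : ℓ ∈ labSet Q y := by rw [← labSet_eq hdata y]; exact hy
  have honp : onP Q (mo Q (vAt Q y ℓ)) (vAt Q x ℓ) := by
    rw [← hmo]; exact mo_onP Q (vAt Q x ℓ)
  exact onP_label_inj honp (mo_onP Q (vAt Q y ℓ))
    (by rw [(vAt_spec hxQ).2, (vAt_spec hyQ).2])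

end DataEq

lemma label_inl_eq_min (P : PartialDecomp X t) (x : X) :
    P.label (Sum.inl x) = (labSet P x).min' (labSet_nonempty P x) := by
  refine le_antisymm ?_ (Finset.min'_le _ _ (mem_labSet.2 ⟨_, onP_self P x, rfl⟩))
  apply Finset.le_min'
  intro ℓ h
  obtain ⟨v, hv, rfl⟩ := mem_labSet.1 h
  exact label_le_of_rtg hv

lemma parent_none_max {P : PartialDecomp X t} {x : X} {v : X ⊕ Fin P.m} {ℓ : ℕ}
    (hp : P.F.parent v = none) (hv : onP P x v) (hℓ : ℓ ∈ labSet P x) :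
    ℓ ≤ P.label v := by
  obtain ⟨u, hu, rfl⟩ := mem_labSet.1 hℓ
  rcases onP_total hu hv with h | h
  · exact label_le_of_rtg h
  · rcases (Relation.reflTransGen_iff_eq_or_transGen).1 h with he | ht'
    · rw [he]
    · exfalso
      obtain ⟨c, hc, -⟩ := (TransGen.head'_iff).1 ht'
      have hc' : P.F.parent v = some c := hc
      rw [hp] at hc'
      cases hc'

lemma parent_some_min {P : PartialDecomp X t} {x : X} {v p : X ⊕ Fin P.m}
    (hp : P.F.parent v = some p) (hv : onP P x v) :
    onP P x p ∧ P.label v < P.label p ∧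
      ∀ ℓ ∈ labSet P x, P.label v < ℓ → P.label p ≤ ℓ := by
  have hstep : stp P v p := hp
  have hxp : onP P x p := hv.tail hstep
  have hlt : P.label v < P.label p := label_lt (TransGen.single hstep)
  refine ⟨hxp, hlt, ?_⟩
  intro ℓ hℓ hvℓ
  obtain ⟨u, hu, rfl⟩ := mem_labSet.1 hℓ
  have hr : ReflTransGen (stp P) v u := rtg_of_le hv hu hvℓ.le
  have htr : TransGen (stp P) v u := by
    rcases (Relation.reflTransGen_iff_eq_or_transGen).1 hr with he | h
    · exact absurd hvℓ (by rw [he]; omega)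
    · exact h
  obtain ⟨c, hc, hcu⟩ := (TransGen.head'_iff).1 htr
  have hcp : c = p := stp_rightUnique P hc hstep
  rw [← hcp]
  exact label_le_of_rtg hcu

theorem pdequiv_of_data_eq {P Q : PartialDecomp X t} (ht : 0 < t)
    (hdata : data P ht = data Q ht) : PDEquiv P Q := by
  have hS : ∀ x, labSet P x = labSet Q x := labSet_eq hdata
  have hdata' : data Q ht = data P ht := hdata.symm
  set f : (X ⊕ Fin P.m) → (X ⊕ Fin Q.m) := fun v => vAt Q (mo P v) (P.label v) with hf
  set g : (X ⊕ Fin Q.m) → (X ⊕ Fin P.m) := fun w => vAt P (mo Q w) (Q.label w) with hg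
  have hfmemP : ∀ v : X ⊕ Fin P.m, P.label v ∈ labSet P (mo P v) := fun v =>
    mem_labSet.2 ⟨v, mo_onP P v, rfl⟩
  have keyP : ∀ v : X ⊕ Fin P.m, vAt P (mo P v) (P.label v) = v := fun v =>
    vAt_eq (mo_onP P v) rfl
  have hfmemQ : ∀ v : X ⊕ Fin P.m, P.label v ∈ labSet Q (mo P v) := fun v => by
    rw [← hS (mo P v)]; exact hfmemP v
  have hfspec : ∀ v, onP Q (mo P v) (f v) ∧ Q.label (f v) = P.label v := fun v =>
    vAt_spec (hfmemQ v)
  have hmof : ∀ v, mo Q (f v) = mo P v := fun v => by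
    have h := mo_transfer hdata (mo P v) (P.label v) (hfmemP v)
    rw [keyP v] at h
    exact h.symm
  have hgmemQ : ∀ w : X ⊕ Fin Q.m, Q.label w ∈ labSet Q (mo Q w) := fun w =>
    mem_labSet.2 ⟨w, mo_onP Q w, rfl⟩
  have keyQ : ∀ w : X ⊕ Fin Q.m, vAt Q (mo Q w) (Q.label w) = w := fun w =>
    vAt_eq (mo_onP Q w) rfl
  have hgmemP : ∀ w : X ⊕ Fin Q.m, Q.label w ∈ labSet P (mo Q w) := fun w => by
    rw [hS (mo Q w)]; exact hgmemQ w
  have hgspec : ∀ w, onP P (mo Q w) (g w) ∧ P.label (g w) = Q.label w := fun w =>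
    vAt_spec (hgmemP w)
  have hmog : ∀ w, mo P (g w) = mo Q w := fun w => by
    have h := mo_transfer hdata' (mo Q w) (Q.label w) (hgmemQ w)
    rw [keyQ w] at h
    exact h.symm
  have hgf : ∀ v, g (f v) = v := fun v => by
    show vAt P (mo Q (f v)) (Q.label (f v)) = v
    rw [hmof v, (hfspec v).2, keyP v]
  have hfg : ∀ w, f (g w) = w := fun w => by
    show vAt Q (mo P (g w)) (P.label (g w)) = w
    rw [hmog w, (hgspec w).2, keyQ w]
  refine ⟨⟨f, g, hgf, hfg⟩, ?_, ?_, ?_⟩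
  · -- fixes X pointwise
    intro x
    simp only [Equiv.coe_fn_mk]
    show f (Sum.inl x) = Sum.inl x
    have hQl : Q.label (Sum.inl x) = P.label (Sum.inl x) := by
      rw [label_inl_eq_min Q x, label_inl_eq_min P x]
      refine le_antisymm ?_ ?_
      · exact Finset.le_min' _ _ _ fun y hy => Finset.min'_le _ _ (by rw [← hS x]; exact hy)
      · exact Finset.le_min' _ _ _ fun y hy => Finset.min'_le _ _ (by rw [hS x]; exact hy)
    have hmemx : P.label (Sum.inl x) ∈ labSet P x :=
      mem_labSet.2 ⟨_, onP_self P x, rfl⟩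
    have h1 : vAt P x (P.label (Sum.inl x)) = Sum.inl x := vAt_eq (onP_self P x) rfl
    have h2 : vAt P (mo P (Sum.inl x)) (P.label (Sum.inl x)) = Sum.inl x := keyP _
    have h3 : vAt Q (mo P (Sum.inl x)) (P.label (Sum.inl x)) = vAt Q x (P.label (Sum.inl x)) :=
      vAt_transfer hdata (hfmemP (Sum.inl x)) hmemx (h2.trans h1.symm)
    have h4 : vAt Q x (P.label (Sum.inl x)) = Sum.inl x := vAt_eq (onP_self Q x) hQl
    show vAt Q (mo P (Sum.inl x)) (P.label (Sum.inl x)) = Sum.inl x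
    rw [h3, h4]
  · -- parents
    intro v
    simp only [Equiv.coe_fn_mk]
    have hxv : onP P (mo P v) v := mo_onP P v
    cases hp : P.F.parent v with
    | none =>
      show Q.F.parent (f v) = Option.map f none
      rw [Option.map_none]
      cases hq : Q.F.parent (f v) with
      | none => rfl
      | some q =>
        exfalso
        have h5 := parent_some_min hq (hfspec v).1
        have hmem : Q.label q ∈ labSet Q (mo P v) := mem_labSet.2 ⟨q, h5.1, rfl⟩
        have hmem' : Q.label q ∈ labSet P (mo P v) := by rw [hS (mo P v)]; exact hmem
        have h6 : Q.label q ≤ P.label v := parent_none_max hp hxv hmem'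
        have h7 := h5.2.1
        rw [(hfspec v).2] at h7
        omega
    | some p =>
      have hPmin := parent_some_min hp hxv
      have hpmem : P.label p ∈ labSet P (mo P v) := mem_labSet.2 ⟨p, hPmin.1, rfl⟩
      cases hq : Q.F.parent (f v) with
      | none =>
        exfalso
        have hpmem' : P.label p ∈ labSet Q (mo P v) := by rw [← hS (mo P v)]; exact hpmem
        have h6 : P.label p ≤ Q.label (f v) := parent_none_max hq (hfspec v).1 hpmem'
        rw [(hfspec v).2] at h6
        have := hPmin.2.1
        omega
      | some q =>
        have hQmin := parent_some_min hq (hfspec v).1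
        have hqmem : Q.label q ∈ labSet Q (mo P v) := mem_labSet.2 ⟨q, hQmin.1, rfl⟩
        have hpmem' : P.label p ∈ labSet Q (mo P v) := by rw [← hS (mo P v)]; exact hpmem
        have hle1 : Q.label q ≤ P.label p := by
          refine hQmin.2.2 (P.label p) hpmem' ?_
          rw [(hfspec v).2]
          exact hPmin.2.1
        have hqmem' : Q.label q ∈ labSet P (mo P v) := by rw [hS (mo P v)]; exact hqmem
        have hle2 : P.label p ≤ Q.label q := by
          refine hPmin.2.2 (Q.label q) hqmem' ?_
          have := hQmin.2.1
          rw [(hfspec v).2] at this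
          exact this
        have hlab : Q.label q = P.label p := le_antisymm hle1 hle2
        have hqv : vAt Q (mo P v) (P.label p) = q := vAt_eq hQmin.1 hlab
        have hp1 : vAt P (mo P p) (P.label p) = p := keyP p
        have hp2 : vAt P (mo P v) (P.label p) = p := vAt_eq hPmin.1 rfl
        have h3 : vAt Q (mo P p) (P.label p) = vAt Q (mo P v) (P.label p) :=
          vAt_transfer hdata (hfmemP p) hpmem (hp1.trans hp2.symm)
        rw [Option.map_some]
        congr 1
        show q = vAt Q (mo P p) (P.label p)
        rw [h3, hqv]
  · -- labels
    intro v
    simp only [Equiv.coe_fn_mk]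
    exact (hfspec v).2

theorem card_quot_le (ht : 0 < t) :
    Nat.card (Quot (@PDEquiv X t)) ≤ (2 ^ t * (t * Fintype.card X)) ^ Fintype.card X := by
  classical
  have hinj : Function.Injective
      (fun q : Quot (@PDEquiv X t) => data (Quot.out q) ht) := by
    intro a b h
    have he := pdequiv_of_data_eq ht h
    calc a = Quot.mk _ a.out := (Quot.out_eq a).symm
      _ = Quot.mk _ b.out := Quot.sound he
      _ = b := Quot.out_eq b
  have hcard := Nat.card_le_card_of_injective _ hinj
  refine hcard.trans (le_of_eq ?_)
  rw [Nat.card_eq_fintype_card]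
  rw [Fintype.card_fun]
  rw [Fintype.card_prod, Fintype.card_prod, Fintype.card_fun, Fintype.card_bool,
    Fintype.card_fin]

theorem card_quot_le_one (X : Type) [Fintype X] :
    Nat.card (Quot (@PDEquiv X 0)) ≤ 1 := by
  have hsub : Subsingleton (Quot (@PDEquiv X 0)) := by
    constructor
    intro a b
    induction a using Quot.ind with | _ P => ?_
    induction b using Quot.ind with | _ Q => ?_
    apply Quot.sound
    have hP : IsEmpty (X ⊕ Fin P.m) :=
      ⟨fun v => by have h1 := P.label_pos v; have h2 := P.label_le v; omega⟩
    have hQ : IsEmpty (X ⊕ Fin Q.m) :=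
      ⟨fun v => by have h1 := Q.label_pos v; have h2 := Q.label_le v; omega⟩
    refine ⟨Equiv.equivOfIsEmpty _ _, ?_, ?_, ?_⟩
    · intro x; exact (hP.false (Sum.inl x)).elim
    · intro v; exact (hP.false v).elim
    · intro v; exact (hP.false v).elim
  have h := Nat.card_le_card_of_injective (fun _ : Quot (@PDEquiv X 0) => (0 : Fin 1))
    (fun a b _ => Subsingleton.elim a b)
  simpa [Nat.card_eq_fintype_card] using h

end PD17

/-- The number of equivalence classes (fixing `X` pointwise) of rooted forests of height
at most `t` with all leaves in `X`, equipped with a strictly ancestor-increasing labeling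
into `{1,…,t}`, is at most `2^{|X|·t + |X|·log₂ t + |X|·log₂ |X|}`. -/
theorem stmt17 (X : Type) [Fintype X] (t : ℕ) :
    (Nat.card (Quot (@PDEquiv X t)) : ℝ) ≤
      2 ^ ((Fintype.card X * t : ℝ)
        + (Fintype.card X : ℝ) * Real.logb 2 t
        + (Fintype.card X : ℝ) * Real.logb 2 (Fintype.card X)) := by
  letI : LinearOrder X := LinearOrder.lift' (Fintype.equivFin X) (Fintype.equivFin X).injective
  set n := Fintype.card X with hn
  have hElb : (0:ℝ) ≤ (n : ℝ) * Real.logb 2 (n : ℝ) := by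
    rcases Nat.eq_zero_or_pos n with h0 | h1
    · simp [h0]
    · have : (0:ℝ) ≤ Real.logb 2 (n : ℝ) :=
        Real.logb_nonneg (by norm_num) (by exact_mod_cast h1)
      positivity
  rcases Nat.eq_zero_or_pos t with rfl | ht
  · have h1 : (Nat.card (Quot (@PDEquiv X 0)) : ℝ) ≤ 1 := by
      exact_mod_cast PD17.card_quot_le_one X
    refine h1.trans ?_
    have hE : (0:ℝ) ≤ (n * (0:ℕ) : ℝ) + (n : ℝ) * Real.logb 2 (0:ℕ)
        + (n : ℝ) * Real.logb 2 (n : ℝ) := by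
      simp only [Nat.cast_zero, mul_zero, zero_add, Real.logb_zero]
      simpa using hElb
    calc (1:ℝ) = 2 ^ (0:ℝ) := (Real.rpow_zero 2).symm
      _ ≤ _ := Real.rpow_le_rpow_of_exponent_le one_le_two hE
  · have h1 := PD17.card_quot_le (X := X) ht
    have h1' : (Nat.card (Quot (@PDEquiv X t)) : ℝ) ≤ ((2 ^ t * (t * n)) ^ n : ℕ) := by
      exact_mod_cast h1
    refine h1'.trans ?_
    rcases Nat.eq_zero_or_pos n with h0 | h1n
    · rw [h0]
      simp only [pow_zero, Nat.cast_one, Nat.cast_zero, zero_mul, zero_add, zero_mul, add_zero]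
      rw [Real.rpow_zero]
    · have h2 : (2:ℝ) ^ ((n * t : ℝ) + (n : ℝ) * Real.logb 2 t
          + (n : ℝ) * Real.logb 2 n)
          = ((2 ^ t * (t * n)) ^ n : ℕ) := by
        have hT : (0:ℝ) < (t:ℝ) := by exact_mod_cast ht
        have hN : (0:ℝ) < (n:ℝ) := by exact_mod_cast h1n
        rw [Real.rpow_add two_pos, Real.rpow_add two_pos]
        have e1 : (2:ℝ) ^ ((n : ℝ) * (t : ℝ)) = ((2:ℝ) ^ t) ^ n := by
          rw [show ((n:ℝ) * (t:ℝ)) = (((n * t : ℕ)):ℝ) by push_cast; ring,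
            Real.rpow_natCast, pow_mul']
        have e2 : (2:ℝ) ^ ((n : ℝ) * Real.logb 2 t) = (t:ℝ) ^ n := by
          rw [mul_comm, Real.rpow_mul (by norm_num : (0:ℝ) ≤ 2),
            Real.rpow_logb two_pos (by norm_num) hT, Real.rpow_natCast]
        have e3 : (2:ℝ) ^ ((n : ℝ) * Real.logb 2 n) = (n:ℝ) ^ n := by
          rw [mul_comm, Real.rpow_mul (by norm_num : (0:ℝ) ≤ 2),
            Real.rpow_logb two_pos (by norm_num) hN, Real.rpow_natCast]
        rw [e1, e2, e3]
        push_cast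
        ring
      exact le_of_eq h2.symm
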